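/- A bilateral finite form of Jacobi's triple product identity: Let $m, n \ge 0$ be integers and let $q, x$ be nonzero complex numbers such that $(q;q)_{m+n} \ne 0$ and all factors occurring in denominators below are nonzero. Then $\sum_{k=-m}^{n} \binom{m+n}{m+k}_q \frac{(1 - xq^{2k+1})\, x^{2k} q^{2k^2+k}}{(1/x;q)_{m-k} \, (xq;q)_{n+k+1}} = 1$, where q-shifted factorials with (possibly) negative integer index are defined by $(a;q)_{-N} = 1/\prod_{j=1}^{N}(1 - aq^{-j})$ for $N \ge 0$. -/

import Mathlib

set_option autoImplicit false
set_option maxHeartbeats 1600000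

/-- The q-shifted factorial `(a;q)_n = ∏_{j=0}^{n-1} (1 - a q^j)`. -/
noncomputable def qPoch (q a : ℂ) (n : ℕ) : ℂ := ∏ j ∈ Finset.range n, (1 - a * q ^ j)

/-- The q-binomial coefficient `(q;q)_n / ((q;q)_k (q;q)_{n-k})`. -/
noncomputable def qBinom (q : ℂ) (n k : ℕ) : ℂ := qPoch q q n / (qPoch q q k * qPoch q q (n - k))

/-- The q-shifted factorial with integer index: for `n ≥ 0` it is
`(a;q)_n = ∏_{j=0}^{n-1} (1 - a q^j)`, and `(a;q)_{-N} = 1 / ∏_{j=1}^{N} (1 - a q^{-j})`. -/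
noncomputable def qPochZ (q a : ℂ) (n : ℤ) : ℂ :=
  if 0 ≤ n then ∏ j ∈ Finset.range n.toNat, (1 - a * q ^ (j : ℤ))
  else (∏ j ∈ Finset.range (-n).toNat, (1 - a * q ^ (-(j : ℤ) - 1)))⁻¹

lemma qPoch_zero (q a : ℂ) : qPoch q a 0 = 1 := by simp [qPoch]

lemma qPoch_succ (q a : ℂ) (n : ℕ) : qPoch q a (n+1) = qPoch q a n * (1 - a * q ^ n) := by
  simp [qPoch, Finset.prod_range_succ]

lemma qPoch_succ' (q a : ℂ) (n : ℕ) : qPoch q a (n+1) = (1 - a) * qPoch q (a*q) n := by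
  rw [qPoch, Finset.prod_range_succ']
  simp only [pow_zero, mul_one, qPoch]
  rw [mul_comm]
  congr 1
  apply Finset.prod_congr rfl
  intro i _
  ring

lemma qPoch_add (q a : ℂ) (s t : ℕ) :
    qPoch q a (s + t) = qPoch q a s * qPoch q (a * q ^ s) t := by
  rw [qPoch, Finset.prod_range_add]
  congr 1
  apply Finset.prod_congr rfl
  intro i _
  rw [pow_add]; ring

lemma qPoch_ne_zero_of_le {q a : ℂ} {s t : ℕ} (h : s ≤ t) (ht : qPoch q a t ≠ 0) :
    qPoch q a s ≠ 0 := by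
  obtain ⟨d, rfl⟩ := Nat.exists_eq_add_of_le h
  rw [qPoch_add] at ht
  exact left_ne_zero_of_mul ht

lemma qPoch_factor_ne_zero {q a : ℂ} {n : ℕ} (h : qPoch q a n ≠ 0) {i : ℕ} (hi : i < n) :
    1 - a * q ^ i ≠ 0 := by
  rw [qPoch, Finset.prod_ne_zero_iff] at h
  exact h i (Finset.mem_range.2 hi)

/-- exponent j(3j-1)/2 defined recursively -/
def tExp : ℕ → ℕ
  | 0 => 0
  | (j+1) => tExp j + 3*j + 1

lemma tExp_cast (j : ℕ) : 2 * (tExp j : ℤ) = 3 * (j:ℤ)^2 - j := by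
  induction j with
  | zero => simp [tExp]
  | succ j ih => rw [tExp]; push_cast; push_cast at ih; ring_nf; ring_nf at ih; omega

noncomputable def Fterm (q z : ℂ) (N j : ℕ) : ℂ :=
  (-1)^j * qBinom q N j * q^(tExp j) * z^j * (1 - z*q^(2*j)) * qPoch q z j *
    qPoch q (z*q^(N+j+1)) (N-j)
noncomputable def Gterm (q z : ℂ) (N j : ℕ) : ℂ :=
  -((-1)^j * qBinom q N j * (1 - q^j) / (1 - q^N) * q^(N-j) * q^(tExp j) * z^j * qPoch q z j *
    (1 - z*q^(N+j)) * qPoch q (z*q^(N+j+1)) (N-j))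

lemma key_step (q z : ℂ) (j e : ℕ) (hq1 : qPoch q q (j+e+1) ≠ 0) :
    Fterm q z (j+e+1) j = (1 - z*q^(2*(j+e)+1)) * (1 - z*q^(2*(j+e)+2)) * Fterm q z (j+e) j
      + (Gterm q z (j+e+1) (j+1) - Gterm q z (j+e+1) j) := by
  have hQj : qPoch q q j ≠ 0 := qPoch_ne_zero_of_le (by omega) hq1
  have hQe : qPoch q q e ≠ 0 := by
    refine qPoch_ne_zero_of_le (t := e) le_rfl ?_
    have : qPoch q q (j+e+1) = qPoch q q e * qPoch q (q * q^e) (j+1) := by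
      rw [← qPoch_add]; congr 1; omega
    rw [this] at hq1
    exact left_ne_zero_of_mul hq1
  have hQN : qPoch q q (j+e) ≠ 0 := qPoch_ne_zero_of_le (by omega) hq1
  have h1a : (1:ℂ) - q*q^(j+e) ≠ 0 := by
    have := qPoch_factor_ne_zero hq1 (show j+e < j+e+1 by omega); exact this
  have h1b : (1:ℂ) - q*q^e ≠ 0 := by
    have := qPoch_factor_ne_zero hq1 (show e < j+e+1 by omega); exact this
  have h1c : (1:ℂ) - q*q^j ≠ 0 := by
    have := qPoch_factor_ne_zero hq1 (show j < j+e+1 by omega); exact this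
  have r2 : qPoch q (z*q^(2*j+e+1)) e * (1 - z*q^(2*j+e+1)*q^e)
      = (1 - z*q^(2*j+e+1)) * qPoch q (z*q^(2*j+e+2)) e := by
    have h1 := qPoch_succ q (z*q^(2*j+e+1)) e
    have h2 := qPoch_succ' q (z*q^(2*j+e+1)) e
    rw [h1] at h2
    rw [h2, show z*q^(2*j+e+1)*q = z*q^(2*j+e+2) from by ring]
  have r3 : (1 - z*q^(2*j+e+2)) * qPoch q (z*q^(2*j+e+3)) e
      = qPoch q (z*q^(2*j+e+2)) e * (1 - z*q^(2*j+e+2)*q^e) := by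
    have h1 := qPoch_succ q (z*q^(2*j+e+2)) e
    have h2 := qPoch_succ' q (z*q^(2*j+e+2)) e
    rw [h1] at h2
    rw [show z*q^(2*j+e+3) = z*q^(2*j+e+2)*q from by ring, ← h2]
  set Cf : ℂ := (-1)^j * q^(tExp j) * z^j * qPoch q z j * qPoch q (z*q^(2*j+e+2)) e
      * qPoch q q (j+e) /
      (qPoch q q j * qPoch q q e * ((1-q*q^(j+e)) * (1-q*q^e) * (1-q*q^j))) with hCf
  have hF1 : Fterm q z (j+e+1) j
      = Cf * ((1-q*q^(j+e)) * (1-q*q^(j+e)) * (1-q*q^j) * (1-z*q^(2*j))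
              * (1 - z*q^(2*j+e+2)*q^e)) := by
    simp only [Fterm, qBinom, hCf]
    rw [show j+e+1-j = e+1 from by omega, show j+e+1+j+1 = 2*j+e+2 from by omega,
        qPoch_succ q q (j+e), qPoch_succ q q e, qPoch_succ q (z*q^(2*j+e+2)) e]
    field_simp
  have hF0 : (1 - z*q^(2*(j+e)+1)) * (1 - z*q^(2*(j+e)+2)) * Fterm q z (j+e) j
      = Cf * ((1-q*q^(j+e)) * (1-q*q^e) * (1-q*q^j) * (1-z*q^(2*j))
              * (1 - z*q^(2*j+e+2)*q^e) * (1-z*q^(2*j+e+1))) := by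
    have expand : (1 - z*q^(2*(j+e)+1)) * (1 - z*q^(2*(j+e)+2)) * Fterm q z (j+e) j
        = ((-1)^j * qBinom q (j+e) j * q^(tExp j) * z^j * (1 - z*q^(2*j)) * qPoch q z j
            * (1 - z*q^(2*j+e+2)*q^e))
          * (qPoch q (z*q^(2*j+e+1)) e * (1 - z*q^(2*j+e+1)*q^e)) := by
      simp only [Fterm]
      rw [show j+e+j+1 = 2*j+e+1 from by omega, show j+e-j = e from by omega]
      ring
    rw [expand, r2]
    simp only [qBinom, hCf]
    rw [show j+e-j = e from by omega]
    generalize hB : (1:ℂ) - q*q^e = B at *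
    field_simp
  have hG0 : Gterm q z (j+e+1) j
      = Cf * (-((q*q^e) * (1-q^j) * (1-q*q^(j+e)) * (1-q*q^j) * (1-z*q^(2*j+e+1))
              * (1 - z*q^(2*j+e+2)*q^e))) := by
    simp only [Gterm, qBinom, hCf]
    rw [show j+e+1-j = e+1 from by omega, show j+e+1+j+1 = 2*j+e+2 from by omega,
        show j+e+1+j = 2*j+e+1 from by omega,
        qPoch_succ q q (j+e), qPoch_succ q q e, qPoch_succ q (z*q^(2*j+e+2)) e]
    have hne : (1:ℂ) - q^(j+e+1) ≠ 0 := by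
      rw [pow_succ, mul_comm]; exact h1a
    field_simp
    ring
  have hG1 : Gterm q z (j+e+1) (j+1)
      = Cf * ((1-q*q^(j+e)) * (1-q*q^e) * (1-q*q^j) * (q^e*q^(3*j)*q) * z * (1-z*q^j)
              * (1 - z*q^(2*j+e+2)*q^e)) := by
    have expand : Gterm q z (j+e+1) (j+1)
        = -((-1)^(j+1) * qBinom q (j+e+1) (j+1) * (1 - q^(j+1)) / (1 - q^(j+e+1))
            * q^e * q^(tExp j + 3*j + 1) * z^(j+1) * qPoch q z (j+1))
          * ((1 - z*q^(2*j+e+2)) * qPoch q (z*q^(2*j+e+3)) e) := by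
      simp only [Gterm, tExp]
      rw [show j+e+1-(j+1) = e from by omega, show j+e+1+(j+1)+1 = 2*j+e+3 from by omega,
          show j+e+1+(j+1) = 2*j+e+2 from by omega]
      ring
    rw [expand, r3]
    simp only [qBinom, hCf]
    rw [show j+e+1-(j+1) = e from by omega,
        qPoch_succ q q (j+e), qPoch_succ q q j, qPoch_succ q z j]
    have hne : (1:ℂ) - q^(j+e+1) ≠ 0 := by
      rw [pow_succ, mul_comm]; exact h1a
    field_simp
    ring
  rw [hF1, hF0, hG1, hG0]
  ring

theorem core (q z : ℂ) : ∀ N : ℕ, qPoch q q N ≠ 0 →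
    ∑ j ∈ Finset.range (N+1), Fterm q z N j = qPoch q z (2*N+1) := by
  intro N
  induction N with
  | zero =>
    intro _
    simp [Fterm, qBinom, tExp, qPoch_succ, qPoch_zero]
  | succ N ih =>
    intro hq1
    have hqN : qPoch q q N ≠ 0 := qPoch_ne_zero_of_le (Nat.le_succ N) hq1
    have hq1' : (1 : ℂ) - q * q ^ N ≠ 0 := by
      have := qPoch_factor_ne_zero hq1 (Nat.lt_succ_self N)
      exact this
    -- β
    set β : ℂ := (1 - z*q^(2*N+1)) * (1 - z*q^(2*N+2)) with hβ
    have key : ∀ j ∈ Finset.range (N+1),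
        Fterm q z (N+1) j =
          β * Fterm q z N j + (Gterm q z (N+1) (j+1) - Gterm q z (N+1) j) := by
      intro j hj
      rw [Finset.mem_range, Nat.lt_succ_iff] at hj
      have h := key_step q z j (N-j) (by
        rw [show j+(N-j)+1 = N+1 from by omega]; exact hq1)
      rw [show j+(N-j)+1 = N+1 from by omega, show j+(N-j) = N from by omega] at h
      exact h
    have sum1 : ∑ j ∈ Finset.range (N+2), Fterm q z (N+1) j
        = (∑ j ∈ Finset.range (N+1), Fterm q z (N+1) j) + Fterm q z (N+1) (N+1) := by
      rw [Finset.sum_range_succ]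
    rw [sum1, Finset.sum_congr rfl key, Finset.sum_add_distrib, ← Finset.mul_sum, ih hqN]
    have tele : ∑ j ∈ Finset.range (N+1), (Gterm q z (N+1) (j+1) - Gterm q z (N+1) j)
        = Gterm q z (N+1) (N+1) - Gterm q z (N+1) 0 := Finset.sum_range_sub _ _
    rw [tele]
    have hG0 : Gterm q z (N+1) 0 = 0 := by simp [Gterm]
    have hqn1 : (1:ℂ) - q^(N+1) ≠ 0 := by
      rw [pow_succ, mul_comm]; exact hq1'
    have hGtop : Gterm q z (N+1) (N+1) = - Fterm q z (N+1) (N+1) := by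
      rw [Gterm, Fterm]
      have h1 : qBinom q (N+1) (N+1) = 1 := by
        rw [qBinom]
        simp only [Nat.sub_self]
        rw [qPoch_zero, mul_one, div_self hq1]
      rw [h1]
      simp only [Nat.sub_self, qPoch_zero]
      field_simp
      ring_nf
    rw [hG0, hGtop]
    have hsplit : qPoch q z (2*(N+1)+1)
        = qPoch q z (2*N+1) * ((1 - z*q^(2*N+1)) * (1 - z*q^(2*N+2))) := by
      have h2 : 2*(N+1)+1 = (2*N+1) + 2 := by ring
      rw [h2, qPoch_add]
      congr 1
      have h3 : (2:ℕ) = 1 + 1 := rfl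
      rw [h3, qPoch_succ, qPoch_succ, qPoch_zero]
      rw [pow_succ]
      ring_nf
    rw [hsplit]
    ring

lemma qPochZ_nonneg (q a : ℂ) {n : ℤ} (h : 0 ≤ n) :
    qPochZ q a n = ∏ j ∈ Finset.range n.toNat, (1 - a * q ^ (j : ℤ)) := if_pos h

lemma qPochZ_neg (q a : ℂ) {n : ℤ} (h : ¬ 0 ≤ n) :
    qPochZ q a n = (∏ j ∈ Finset.range (-n).toNat, (1 - a * q ^ (-(j : ℤ) - 1)))⁻¹ := if_neg h

lemma sum_range_cast (A : ℕ) : 2 * ((∑ i ∈ Finset.range A, i : ℕ) : ℤ) = (A:ℤ) * ((A:ℤ) - 1) := by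
  cases A with
  | zero => simp
  | succ a =>
    have h := Finset.sum_range_id_mul_two (a+1)
    have : ((a+1) * (a+1-1) : ℕ) = (a+1)*a := by rw [Nat.add_sub_cancel]
    rw [this] at h
    have := congrArg (Nat.cast : ℕ → ℤ) h
    push_cast at this
    push_cast
    linarith

/-- A bilateral finite form of Jacobi's triple product identity. -/
theorem finite_jacobi_triple_product (m n : ℕ) (q x : ℂ) (hq : q ≠ 0) (hx : x ≠ 0)
    (hqq : qPoch q q (m + n) ≠ 0)
    (hden : ∀ k ∈ Finset.Icc (-(m : ℤ)) (n : ℤ),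
      qPochZ q (1 / x) ((m : ℤ) - k) * qPochZ q (x * q) ((n : ℤ) + k + 1) ≠ 0) :
    ∑ k ∈ Finset.Icc (-(m : ℤ)) (n : ℤ),
      qBinom q (m + n) ((m : ℤ) + k).toNat *
        ((1 - x * q ^ (2 * k + 1)) * x ^ (2 * k) * q ^ (2 * k ^ 2 + k)) /
        (qPochZ q (1 / x) ((m : ℤ) - k) * qPochZ q (x * q) ((n : ℤ) + k + 1))
    = 1 := by
  set N := m + n with hN
  set z : ℂ := x * q ^ (1 - 2*(m:ℤ)) with hz
  -- membership of endpoints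
  have hmem_m : -(m:ℤ) ∈ Finset.Icc (-(m:ℤ)) (n:ℤ) := by
    simp only [Finset.mem_Icc]; omega
  have hmem_n : (n:ℤ) ∈ Finset.Icc (-(m:ℤ)) (n:ℤ)  := by
    simp only [Finset.mem_Icc]; omega
  -- the nonvanishing lemma
  have nz : ∀ s : ℤ, 1 - 2*(m:ℤ) ≤ s → s ≤ 2*(n:ℤ) + 1 → 1 - x * q ^ s ≠ 0 := by
    intro s hs1 hs2
    rcases le_or_gt s 0 with hs0 | hs0
    · -- use k = -m
      have h := hden _ hmem_m
      have hL : qPochZ q (1/x) ((m:ℤ) - (-(m:ℤ))) ≠ 0 := left_ne_zero_of_mul h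
      rw [qPochZ_nonneg _ _ (by omega)] at hL
      rw [Finset.prod_ne_zero_iff] at hL
      have ht : (-s).toNat ∈ Finset.range ((m:ℤ) - (-(m:ℤ))).toNat := by
        rw [Finset.mem_range]; omega
      have hfac := hL _ ht
      intro hcon
      apply hfac
      have hts : ((((-s).toNat) : ℕ) : ℤ) = -s := by omega
      have hx1 : x * q ^ s = 1 := by linear_combination -hcon
      rw [hts, one_div, sub_eq_zero, zpow_neg, eq_comm, ← mul_inv, hx1, inv_one]
    · -- use k = n
      have h := hden _ hmem_n
      have hR : qPochZ q (x*q) ((n:ℤ) + (n:ℤ) + 1) ≠ 0 := right_ne_zero_of_mul h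
      rw [qPochZ_nonneg _ _ (by omega)] at hR
      rw [Finset.prod_ne_zero_iff] at hR
      have ht : (s-1).toNat ∈ Finset.range ((n:ℤ) + (n:ℤ) + 1).toNat := by
        rw [Finset.mem_range]; omega
      have hfac := hR _ ht
      intro hcon
      apply hfac
      have hts : ((((s-1).toNat) : ℕ) : ℤ) = s - 1 := by omega
      rw [hts]
      have : x*q*q^(s-1) = x*q^s := by
        rw [mul_assoc]
        congr 1
        have h2 : q * q^(s-1) = q^(1+(s-1)) := by rw [zpow_add₀ hq, zpow_one]
        rw [h2]
        congr 1
        ring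
      rw [this]
      exact hcon
  -- continue
  have hPi : qPoch q z (2*N+1) ≠ 0 := by
    rw [qPoch, Finset.prod_ne_zero_iff]
    intro i hi
    rw [Finset.mem_range] at hi
    have hb : z * q^i = x * q^((1:ℤ) - 2*m + i) := by
      rw [hz, mul_assoc]
      congr 1
      rw [← zpow_natCast q i, ← zpow_add₀ hq]
    rw [hb]
    exact nz _ (by omega) (by omega)
  -- factor identities
  have fact1 : ∀ t : ℕ, (1:ℂ) - (1/x) * q^((t:ℤ)) = (-x⁻¹ * q^t) * (1 - x * q^(-(t:ℤ))) := by
    intro t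
    rw [zpow_natCast, zpow_neg, zpow_natCast, one_div]
    have hqt : (q:ℂ)^t ≠ 0 := pow_ne_zero t hq
    field_simp
    ring
  -- the per-k identity
  have main : ∀ k ∈ Finset.Icc (-(m:ℤ)) (n:ℤ),
      qBinom q N ((m:ℤ)+k).toNat *
        ((1 - x * q ^ (2 * k + 1)) * x ^ (2 * k) * q ^ (2 * k ^ 2 + k)) /
        (qPochZ q (1 / x) ((m : ℤ) - k) * qPochZ q (x * q) ((n : ℤ) + k + 1))
      = Fterm q z N ((m:ℤ)+k).toNat / qPoch q z (2*N+1) := by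
    intro k hk
    rw [Finset.mem_Icc] at hk
    obtain ⟨hk1, hk2⟩ := hk
    set j : ℕ := ((m:ℤ)+k).toNat with hjdef
    have hj : (j:ℤ) = (m:ℤ) + k := by omega
    have hjN : j ≤ N := by omega
    have hD := hden k (by rw [Finset.mem_Icc]; exact ⟨hk1, hk2⟩)
    rw [div_eq_div_iff hD hPi]
    -- base merge lemma
    have hbase : ∀ i : ℕ, (z*q^j) * q^i = x * q^((1:ℤ) - 2*m + j + i) := by
      intro i
      rw [hz, mul_assoc, mul_assoc]
      congr 1
      rw [← zpow_natCast q j, ← zpow_natCast q i, ← zpow_add₀ hq, ← zpow_add₀ hq]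
      congr 1
      ring
    -- shared zpow merge helper
    have hmerge : ∀ (s t : ℤ), q^s * q^t = q^(s+t) := fun s t => (zpow_add₀ hq s t).symm
    have hzqj : z * q^j = x * q^((1:ℤ) - 2*m + j) := by
      have h0 := hbase 0
      rw [pow_zero, mul_one] at h0
      rw [h0]
      congr 1
      push_cast
      ring
    -- shared monomial identity for cases A and C
    have mono : ∀ A : ℕ, (A:ℤ) = (m:ℤ) - k →
        x^(2*k) * q^(2*k^2+k)
          = (-1)^j * q^(tExp j) * z^j * ((-x⁻¹)^A * q^(∑ i ∈ Finset.range A, i)) := by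
      intro A hA
      have e1 : ((-1:ℂ))^j * (-1)^A = 1 := by
        rw [← pow_add]
        apply Even.neg_one_pow
        exact ⟨m, by omega⟩
      have e2 : (x:ℂ)^j * (x⁻¹)^A = x^((2:ℤ)*k) := by
        rw [inv_pow, ← zpow_natCast x j, ← zpow_natCast x A, ← zpow_neg,
          ← zpow_add₀ hx]
        congr 1
        omega
      have e3 : (q:ℂ)^(tExp j) * (q^((1:ℤ)-2*m))^j * q^(∑ i ∈ Finset.range A, i)
          = q^((2:ℤ)*k^2+k) := by
        rw [← zpow_natCast (q^((1:ℤ)-2*m)) j, ← zpow_mul,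
          ← zpow_natCast q (tExp j), ← zpow_natCast q (∑ i ∈ Finset.range A, i),
          ← zpow_add₀ hq, ← zpow_add₀ hq]
        congr 1
        have t1 := tExp_cast j
        have t2 := sum_range_cast A
        rw [hj] at t1
        rw [hA] at t2
        have hh : 2*((tExp j:ℤ) + ((1:ℤ)-2*m)*(j:ℤ) + ((∑ i ∈ Finset.range A, i : ℕ):ℤ))
            = 2*((2:ℤ)*k^2+k) := by
          rw [hj]
          linear_combination t1 + t2
        rw [hj]
        rw [hj] at hh
        linarith
      calc x^(2*k) * q^(2*k^2+k)
          = (x^((2:ℤ)*k)) * (q^((2:ℤ)*k^2+k)) := by norm_num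
        _ = (((-1:ℂ))^j * (-1)^A) * ((x^j * (x⁻¹)^A) *
              ((q:ℂ)^(tExp j) * (q^((1:ℤ)-2*m))^j * q^(∑ i ∈ Finset.range A, i))) := by
            rw [e1, e2, e3]; ring
        _ = (-1)^j * q^(tExp j) * z^j * ((-x⁻¹)^A * q^(∑ i ∈ Finset.range A, i)) := by
            rw [hz, mul_pow, neg_pow]
            ring
    -- the dagger identity
    have dagger : x^(2*k) * q^(2*k^2+k) * qPoch q (z*q^j) (N+1)
        = (-1)^j * q^(tExp j) * z^j *
          (qPochZ q (1/x) ((m:ℤ)-k) * qPochZ q (x*q) ((n:ℤ)+k+1)) := by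
      by_cases hc1 : 0 ≤ (m:ℤ) - k
      · by_cases hc2 : 0 ≤ (n:ℤ) + k + 1
        · -- Case A
          set A : ℕ := ((m:ℤ)-k).toNat with hAdef
          set B : ℕ := ((n:ℤ)+k+1).toNat with hBdef
          have hA : (A:ℤ) = (m:ℤ) - k := by omega
          have hB : (B:ℤ) = (n:ℤ) + k + 1 := by omega
          have hAB : N + 1 = A + B := by omega
          rw [qPochZ_nonneg _ _ hc1, qPochZ_nonneg _ _ hc2]
          have hPB : ∏ t ∈ Finset.range ((n:ℤ)+k+1).toNat, (1 - x*q*q^((t:ℤ)))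
              = qPoch q (x*q) B := by
            rw [qPoch]
            apply Finset.prod_congr rfl
            intro t _
            rw [zpow_natCast]
          have hW : ∏ t ∈ Finset.range ((m:ℤ)-k).toNat, (1 - (1/x)*q^((t:ℤ)))
              = ((-x⁻¹)^A * q^(∑ i ∈ Finset.range A, i)) * qPoch q (z*q^j) A := by
            rw [show ((m:ℤ)-k).toNat = A from rfl]
            rw [← Finset.prod_range_reflect (fun t => 1 - (1/x)*q^((t:ℤ))) A]
            have step : ∀ i ∈ Finset.range A,
                (1 - (1/x)*q^(((A-1-i : ℕ)):ℤ)) = (-x⁻¹ * q^(A-1-i)) * (1 - (z*q^j)*q^i) := by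
              intro i hi
              rw [Finset.mem_range] at hi
              rw [fact1 (A-1-i)]
              congr 2
              rw [hbase i]
              congr 1
              have : (((A-1-i : ℕ)):ℤ) = (A:ℤ) - 1 - i := by omega
              rw [this]
              congr 1
              omega
            rw [Finset.prod_congr rfl step, Finset.prod_mul_distrib]
            congr 1
            rw [Finset.prod_mul_distrib, Finset.prod_const, Finset.card_range,
              Finset.prod_pow_eq_pow_sum, Finset.sum_range_reflect (fun t => t) A]
          have hMsplit : qPoch q (z*q^j) (N+1)
              = qPoch q (z*q^j) A * qPoch q (x*q) B := by
            rw [hAB, qPoch_add]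
            congr 1
            rw [hbase A]
            congr 1
            rw [show (1:ℤ) - 2*m + j + A = 1 from by omega, zpow_one]
          rw [hPB, hW, hMsplit]
          linear_combination (qPoch q (z*q^j) A * qPoch q (x*q) B) * mono A hA
        · -- Case C : n+k+1 < 0
          set A : ℕ := ((m:ℤ)-k).toNat with hAdef
          set b' : ℕ := (-((n:ℤ)+k+1)).toNat with hbdef
          have hA : (A:ℤ) = (m:ℤ) - k := by omega
          have hb' : (b':ℤ) = -((n:ℤ)+k+1) := by omega
          have hAs : A = b' + (N+1) := by omega
          rw [qPochZ_nonneg _ _ hc1, qPochZ_neg _ _ hc2]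
          have hVinv : (∏ t ∈ Finset.range b', (1 - (x*q)*q^(-(t:ℤ)-1)))⁻¹ ≠ 0 := by
            have h2 := right_ne_zero_of_mul hD
            rw [qPochZ_neg _ _ hc2] at h2
            exact h2
          have hVne : (∏ t ∈ Finset.range b', (1 - (x*q)*q^(-(t:ℤ)-1))) ≠ 0 := by
            intro h0
            exact hVinv (by rw [h0, inv_zero])
          have hVfac : ∀ t : ℕ, (1:ℂ) - (x*q)*q^(-(t:ℤ)-1) = 1 - x*q^(-(t:ℤ)) := by
            intro t
            congr 1
            rw [mul_assoc]
            congr 1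
            calc q * q^(-(t:ℤ)-1) = q^((1:ℤ)) * q^(-(t:ℤ)-1) := by rw [zpow_one]
              _ = q^((1:ℤ) + (-(t:ℤ)-1)) := hmerge _ _
              _ = q^(-(t:ℤ)) := by congr 1; ring
          have hV : (∏ t ∈ Finset.range b', (1 - (x*q)*q^(-(t:ℤ)-1)))
              = ∏ t ∈ Finset.range b', (1 - x*q^(-(t:ℤ))) :=
            Finset.prod_congr rfl fun t _ => hVfac t
          have hV'ne : (∏ t ∈ Finset.range b', (1 - x*q^(-(t:ℤ)))) ≠ 0 := by
            rw [← hV]; exact hVne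
          have hQA : ∏ t ∈ Finset.range ((m:ℤ)-k).toNat, (1 - (1/x)*q^((t:ℤ)))
              = ((-x⁻¹)^A * q^(∑ i ∈ Finset.range A, i)) *
                ((∏ t ∈ Finset.range b', (1 - x*q^(-(t:ℤ)))) * qPoch q (z*q^j) (N+1)) := by
            rw [show ((m:ℤ)-k).toNat = A from rfl]
            calc ∏ t ∈ Finset.range A, (1 - (1/x)*q^((t:ℤ)))
                = ∏ t ∈ Finset.range A, ((-x⁻¹*q^t) * (1 - x*q^(-(t:ℤ)))) :=
                  Finset.prod_congr rfl fun t _ => fact1 t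
              _ = ((-x⁻¹)^A * q^(∑ i ∈ Finset.range A, i)) *
                    ∏ t ∈ Finset.range A, (1 - x*q^(-(t:ℤ))) := by
                  rw [Finset.prod_mul_distrib, Finset.prod_mul_distrib, Finset.prod_const,
                    Finset.card_range, Finset.prod_pow_eq_pow_sum]
              _ = ((-x⁻¹)^A * q^(∑ i ∈ Finset.range A, i)) *
                    ((∏ t ∈ Finset.range b', (1 - x*q^(-(t:ℤ)))) * qPoch q (z*q^j) (N+1)) := by
                  congr 1
                  rw [hAs, Finset.prod_range_add]
                  congr 1
                  rw [← Finset.prod_range_reflect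
                    (fun i => 1 - x*q^(-(((b'+i : ℕ)):ℤ))) (N+1), qPoch]
                  apply Finset.prod_congr rfl
                  intro i hi
                  rw [Finset.mem_range] at hi
                  rw [hbase i, show (-(((b'+(N+1-1-i) : ℕ)):ℤ)) = 1 - 2*(m:ℤ) + (j:ℤ) + (i:ℤ)
                    from by omega]
          rw [hQA, hV]
          have hc : (((-x⁻¹)^A * q^(∑ i ∈ Finset.range A, i)) *
                ((∏ t ∈ Finset.range b', (1 - x*q^(-(t:ℤ)))) * qPoch q (z*q^j) (N+1))) *
                (∏ t ∈ Finset.range b', (1 - x*q^(-(t:ℤ))))⁻¹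
              = ((-x⁻¹)^A * q^(∑ i ∈ Finset.range A, i)) * qPoch q (z*q^j) (N+1) := by
            rw [show (((-x⁻¹)^A * q^(∑ i ∈ Finset.range A, i)) *
                ((∏ t ∈ Finset.range b', (1 - x*q^(-(t:ℤ)))) * qPoch q (z*q^j) (N+1))) *
                (∏ t ∈ Finset.range b', (1 - x*q^(-(t:ℤ))))⁻¹
              = (((-x⁻¹)^A * q^(∑ i ∈ Finset.range A, i)) * qPoch q (z*q^j) (N+1)) *
                ((∏ t ∈ Finset.range b', (1 - x*q^(-(t:ℤ)))) *
                 (∏ t ∈ Finset.range b', (1 - x*q^(-(t:ℤ))))⁻¹) from by ring,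
              mul_inv_cancel₀ hV'ne, mul_one]
          rw [mul_assoc ((-1:ℂ)^j * q^(tExp j)) (z^j) _] at *
          rw [show ((-1:ℂ))^j * q^(tExp j) * (z^j *
              ((((-x⁻¹)^A * q^(∑ i ∈ Finset.range A, i)) *
                ((∏ t ∈ Finset.range b', (1 - x*q^(-(t:ℤ)))) * qPoch q (z*q^j) (N+1))) *
                (∏ t ∈ Finset.range b', (1 - x*q^(-(t:ℤ))))⁻¹))
            = ((-1:ℂ))^j * q^(tExp j) * z^j *
              ((((-x⁻¹)^A * q^(∑ i ∈ Finset.range A, i)) *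
                ((∏ t ∈ Finset.range b', (1 - x*q^(-(t:ℤ)))) * qPoch q (z*q^j) (N+1))) *
                (∏ t ∈ Finset.range b', (1 - x*q^(-(t:ℤ))))⁻¹) from by ring, hc]
          linear_combination (qPoch q (z*q^j) (N+1)) * mono A hA
      · -- Case B : m - k < 0
        have hc2 : 0 ≤ (n:ℤ) + k + 1 := by omega
        set A' : ℕ := (-((m:ℤ)-k)).toNat with hAdef
        set B : ℕ := ((n:ℤ)+k+1).toNat with hBdef
        have hA' : (A':ℤ) = k - (m:ℤ) := by omega
        have hB : (B:ℤ) = (n:ℤ) + k + 1 := by omega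
        have hBs : B = A' + (N+1) := by omega
        rw [qPochZ_neg _ _ hc1, qPochZ_nonneg _ _ hc2]
        have hWinv : (∏ t ∈ Finset.range A', (1 - (1/x)*q^(-(t:ℤ)-1)))⁻¹ ≠ 0 := by
          have h2 := left_ne_zero_of_mul hD
          rw [qPochZ_neg _ _ hc1] at h2
          exact h2
        have hWne : (∏ t ∈ Finset.range A', (1 - (1/x)*q^(-(t:ℤ)-1))) ≠ 0 := by
          intro h0
          exact hWinv (by rw [h0, inv_zero])
        have fact2 : ∀ t : ℕ, (1:ℂ) - (1/x)*q^(-(t:ℤ)-1)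
            = (-x⁻¹ * (q^(t+1))⁻¹) * (1 - (x*q)*q^t) := by
          intro t
          have hzp : q^(-(t:ℤ)-1) = ((q:ℂ)^(t+1))⁻¹ := by
            rw [← zpow_natCast q (t+1), ← zpow_neg]
            congr 1
            push_cast
            ring
          have hqt : (q:ℂ)^(t+1) ≠ 0 := pow_ne_zero _ hq
          rw [hzp, one_div]
          field_simp
          ring
        have hW : (∏ t ∈ Finset.range A', (1 - (1/x)*q^(-(t:ℤ)-1)))
            = ((-x⁻¹)^A' * (q^(∑ t ∈ Finset.range A', (t+1)))⁻¹) * qPoch q (x*q) A' := by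
          rw [Finset.prod_congr rfl fun t _ => fact2 t, Finset.prod_mul_distrib]
          congr 1
          rw [Finset.prod_mul_distrib, Finset.prod_const, Finset.card_range,
            Finset.prod_inv_distrib, Finset.prod_pow_eq_pow_sum]
        have hPB : ∏ t ∈ Finset.range ((n:ℤ)+k+1).toNat, (1 - x*q*q^((t:ℤ)))
            = qPoch q (x*q) B := by
          rw [qPoch]
          apply Finset.prod_congr rfl
          intro t _
          rw [zpow_natCast]
        have hsplitB : qPoch q (x*q) B = qPoch q (x*q) A' * qPoch q (z*q^j) (N+1) := by
          rw [hBs, qPoch_add]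
          congr 2
          rw [hzqj, mul_assoc]
          congr 1
          calc q * q^(A':ℕ) = q^((1:ℤ)) * q^((A':ℤ)) := by rw [zpow_one, zpow_natCast]
            _ = q^((1:ℤ)+(A':ℤ)) := hmerge _ _
            _ = q^((1:ℤ)-2*m+(j:ℤ)) := by congr 1; omega
        -- monomial identity for case B
        have hSB : 2*((∑ t ∈ Finset.range A', (t+1) : ℕ):ℤ) = (A':ℤ)*((A':ℤ)+1) := by
          have h1 : (∑ t ∈ Finset.range A', (t+1)) = (∑ t ∈ Finset.range A', t) + A' := by
            rw [Finset.sum_add_distrib, Finset.sum_const, Finset.card_range, smul_eq_mul,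
              mul_one]
          rw [h1]
          have := sum_range_cast A'
          push_cast
          push_cast at this
          linarith
        have hev : Even (A' + j) := ⟨k.toNat, by omega⟩
        have hsgn : ((-1:ℂ))^A' = (-1)^j := by
          have h1 : ((-1:ℂ))^(A'+j) = 1 := hev.neg_one_pow
          calc ((-1:ℂ))^A' = (-1)^A' * ((-1)^j * (-1)^j) := by
                rw [← mul_pow]; norm_num
            _ = ((-1:ℂ))^(A'+j) * (-1)^j := by rw [pow_add]; ring
            _ = (-1)^j := by rw [h1, one_mul]
        have monoB : x^(2*k) * q^(2*k^2+k) *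
              ((-x⁻¹)^A' * (q^(∑ t ∈ Finset.range A', (t+1)))⁻¹)
            = (-1)^j * q^(tExp j) * z^j := by
          have e2 : (x:ℂ)^(2*k) * (x⁻¹)^A' = x^((j:ℤ)) := by
            rw [inv_pow, ← zpow_natCast x A', ← zpow_neg, ← zpow_add₀ hx]
            congr 1
            omega
          have e3 : (q:ℂ)^(2*k^2+k) * (q^(∑ t ∈ Finset.range A', (t+1)))⁻¹
              = q^((tExp j:ℤ) + ((1:ℤ)-2*m)*(j:ℤ)) := by
            rw [← zpow_natCast q (∑ t ∈ Finset.range A', (t+1)), ← zpow_neg,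
              ← zpow_add₀ hq]
            congr 1
            have t1 := tExp_cast j
            rw [hj] at t1
            rw [hA'] at hSB
            have hh : 2*((2:ℤ)*k^2+k + -((∑ t ∈ Finset.range A', (t+1) : ℕ):ℤ))
                = 2*((tExp j:ℤ) + ((1:ℤ)-2*m)*((m:ℤ)+k)) := by
              linear_combination -hSB - t1
            rw [hj]
            linarith
          have ezj : z^j = x^((j:ℤ)) * q^(((1:ℤ)-2*m)*(j:ℤ)) := by
            rw [hz, mul_pow, ← zpow_natCast (q^((1:ℤ)-2*m)) j, ← zpow_mul,
              ← zpow_natCast x j]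
          have eT : (q:ℂ)^(tExp j) * q^(((1:ℤ)-2*m)*(j:ℤ))
              = q^((tExp j:ℤ) + ((1:ℤ)-2*m)*(j:ℤ)) := by
            rw [← zpow_natCast q (tExp j)]
            exact hmerge _ _
          have e4 : ((-1:ℂ))^j * q^(tExp j) * z^j
              = (-1)^j * (x^((j:ℤ)) * q^((tExp j:ℤ) + ((1:ℤ)-2*m)*(j:ℤ))) := by
            rw [ezj, ← eT]
            ring
          rw [e4]
          calc x^(2*k) * q^(2*k^2+k) * ((-x⁻¹)^A' * (q^(∑ t ∈ Finset.range A', (t+1)))⁻¹)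
              = ((-1:ℂ))^A' * ((x^(2*k) * (x⁻¹)^A') *
                  (q^(2*k^2+k) * (q^(∑ t ∈ Finset.range A', (t+1)))⁻¹)) := by
                rw [neg_pow]; ring
            _ = ((-1:ℂ))^j * (x^((j:ℤ)) * q^((tExp j:ℤ) + ((1:ℤ)-2*m)*(j:ℤ))) := by
                rw [e2, e3, hsgn]
        have cleared : x^(2*k) * q^(2*k^2+k) * qPoch q (z*q^j) (N+1) *
              (∏ t ∈ Finset.range A', (1 - (1/x)*q^(-(t:ℤ)-1)))
            = (-1)^j * q^(tExp j) * z^j * (qPoch q (x*q) A' * qPoch q (z*q^j) (N+1)) := by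
          rw [hW]
          linear_combination (qPoch q (x*q) A' * qPoch q (z*q^j) (N+1)) * monoB
        rw [hPB, hsplitB]
        have : x^(2*k) * q^(2*k^2+k) * qPoch q (z*q^j) (N+1)
            = (x^(2*k) * q^(2*k^2+k) * qPoch q (z*q^j) (N+1) *
                (∏ t ∈ Finset.range A', (1 - (1/x)*q^(-(t:ℤ)-1)))) *
              (∏ t ∈ Finset.range A', (1 - (1/x)*q^(-(t:ℤ)-1)))⁻¹ := by
          rw [mul_assoc (x^(2*k) * q^(2*k^2+k) * qPoch q (z*q^j) (N+1)) _ _,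
            mul_inv_cancel₀ hWne, mul_one]
        rw [this, cleared]
        ring
    -- assemble
    have hsplit : qPoch q z (2*N+1)
        = qPoch q z j * (qPoch q (z*q^j) (N+1) * qPoch q (z*q^(N+j+1)) (N-j)) := by
      rw [show 2*N+1 = j + ((N+1) + (N-j)) from by omega, qPoch_add, qPoch_add]
      congr 2
      rw [mul_assoc, ← pow_add, show j+(N+1) = N+j+1 from by omega]
    have hfac : (1:ℂ) - x*q^(2*k+1) = 1 - z*q^(2*j) := by
      congr 1
      rw [hz, mul_assoc]
      congr 1
      rw [← zpow_natCast q (2*j), ← zpow_add₀ hq]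
      congr 1
      omega
    rw [hsplit, Fterm]
    linear_combination
      (qBinom q N j * qPoch q z j * qPoch q (z*q^(N+j+1)) (N-j) * (1 - x*q^(2*k+1))) * dagger
      + (qBinom q N j * qPoch q z j * qPoch q (z*q^(N+j+1)) (N-j) * ((-1)^j * q^(tExp j) * z^j)
          * (qPochZ q (1/x) ((m:ℤ)-k) * qPochZ q (x*q) ((n:ℤ)+k+1))) * hfac
  rw [Finset.sum_congr rfl main, ← Finset.sum_div]
  have reindex : ∑ k ∈ Finset.Icc (-(m:ℤ)) (n:ℤ), Fterm q z N ((m:ℤ)+k).toNat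
      = ∑ j ∈ Finset.range (N+1), Fterm q z N j := by
    apply Finset.sum_nbij' (i := fun k => ((m:ℤ)+k).toNat) (j := fun j => (j:ℤ) - m)
    · intro a ha
      rw [Finset.mem_Icc] at ha
      rw [Finset.mem_range]
      omega
    · intro b hb
      rw [Finset.mem_range] at hb
      rw [Finset.mem_Icc]
      omega
    · intro a ha
      rw [Finset.mem_Icc] at ha
      omega
    · intro b hb
      rw [Finset.mem_range] at hb
      omega
    · intro a _
      rfl
  rw [reindex, core q z N hqq, div_self hPi]
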